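/- Let f : ℕ → ℕ be an injective function whose set of periodic points is exactly a single finite cycle F of cardinality n (i.e. F = {j, f(j), …, f^{n-1}(j)} with f^n(j) = j, and f has no periodic points outside F). Then every eigenvector of the isometry S_f on ℓ²(ℕ) lies in span{e_k : k ∈ F}, and the point spectrum of S_f is {z ∈ ℂ : z^n = 1}. -/

import Mathlib

noncomputable def e (k : ℕ) : lp (fun _ : ℕ => ℂ) 2 := lp.single 2 k 1

lemma e_apply (a m : ℕ) : (e a : ∀ _ : ℕ, ℂ) m = if m = a then 1 else 0 := by
  rcases eq_or_ne m a with rfl | h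
  · simp [e, lp.single_apply_self]
  · simp [e, lp.single_apply_ne _ _ _ h, h]

noncomputable def evC (m : ℕ) : lp (fun _ : ℕ => ℂ) 2 →L[ℂ] ℂ :=
  LinearMap.mkContinuous
    { toFun := fun x => x m
      map_add' := fun x y => rfl
      map_smul' := fun c x => rfl }
    1 fun x => by
      show ‖(x : ∀ _ : ℕ, ℂ) m‖ ≤ 1 * ‖x‖
      simpa using lp.norm_apply_le_norm (by norm_num) x m

lemma S_coord (f : ℕ → ℕ) (S : lp (fun _ : ℕ => ℂ) 2 →L[ℂ] lp (fun _ : ℕ => ℂ) 2)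
    (hS : ∀ k, S (e k) = e (f k)) (x : lp (fun _ : ℕ => ℂ) 2) (m : ℕ) :
    HasSum (fun k : ℕ => x k * ((e (f k) : ∀ _ : ℕ, ℂ) m)) ((S x : ∀ _ : ℕ, ℂ) m) := by
  have h0 : HasSum (fun k : ℕ => lp.single 2 k (x k)) x := lp.hasSum_single (by norm_num) x
  have hsingle : ∀ k : ℕ, lp.single 2 k (x k) = x k • e k := by
    intro k
    rw [e, ← lp.single_smul, smul_eq_mul, mul_one]
  have h1 := h0.mapL ((evC m).comp S)
  convert h1 using 2 with k
  rw [ContinuousLinearMap.comp_apply, hsingle, map_smul, hS, map_smul]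
  rfl
  rfl

lemma S_apply_range (f : ℕ → ℕ) (hf : Function.Injective f)
    (S : lp (fun _ : ℕ => ℂ) 2 →L[ℂ] lp (fun _ : ℕ => ℂ) 2)
    (hS : ∀ k, S (e k) = e (f k)) (x : lp (fun _ : ℕ => ℂ) 2) (k : ℕ) :
    (S x : ∀ _ : ℕ, ℂ) (f k) = x k := by
  have h := S_coord f S hS x (f k)
  have h2 : HasSum (fun k' : ℕ => if k' = k then x k else 0) (x k) := hasSum_ite_eq k (x k)
  refine (h.unique (h2.congr_fun ?_)).symm ▸ rfl
  intro k'
  rcases eq_or_ne k' k with rfl | hne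
  · simp [e_apply]
  · have hne2 : f k ≠ f k' := fun h => hne (hf h).symm
    simp [e_apply, if_neg hne, if_neg hne2]

lemma S_apply_nonrange (f : ℕ → ℕ)
    (S : lp (fun _ : ℕ => ℂ) 2 →L[ℂ] lp (fun _ : ℕ => ℂ) 2)
    (hS : ∀ k, S (e k) = e (f k)) (x : lp (fun _ : ℕ => ℂ) 2) (m : ℕ)
    (hm : m ∉ Set.range f) :
    (S x : ∀ _ : ℕ, ℂ) m = 0 := by
  have h := S_coord f S hS x m
  have h2 : HasSum (fun _ : ℕ => (0 : ℂ)) 0 := hasSum_zero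
  refine h.unique (h2.congr_fun ?_) |>.symm ▸ rfl
  intro k
  have : m ≠ f k := fun h' => hm ⟨k, h'.symm⟩
  simp [e_apply, if_neg this]
/-- If the set of periodic points of the injection `f` is exactly one finite cycle `F`
of cardinality `n`, then every eigenvector of `S_f` lies in `span {e k : k ∈ F}` and
the point spectrum of `S_f` is the set of `n`-th roots of unity. -/
theorem stmt4 (f : ℕ → ℕ) (hf : Function.Injective f)
    (n : ℕ) (hn : 1 ≤ n) (j : ℕ) (F : Finset ℕ)
    (hFcard : F.card = n)
    (hForb : (F : Set ℕ) = Set.range (fun i : Fin n => f^[(i : ℕ)] j))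
    (hcycle : f^[n] j = j)
    (hper : ∀ k : ℕ, (∃ h : ℕ, 1 ≤ h ∧ f^[h] k = k) ↔ k ∈ F)
    (S : lp (fun _ : ℕ => ℂ) 2 →L[ℂ] lp (fun _ : ℕ => ℂ) 2)
    (hS : ∀ k, S (e k) = e (f k)) :
    (∀ (x : lp (fun _ : ℕ => ℂ) 2) (lam : ℂ), x ≠ 0 → S x = lam • x →
      x ∈ Submodule.span ℂ {y : lp (fun _ : ℕ => ℂ) 2 | ∃ k ∈ F, y = e k}) ∧
    (∀ lam : ℂ, (∃ x : lp (fun _ : ℕ => ℂ) 2, x ≠ 0 ∧ S x = lam • x) ↔ lam ^ n = 1) := by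
  classical
  -- basic facts about F
  have hFback : ∀ k, f k ∈ F → k ∈ F := by
    intro k hk
    obtain ⟨h, hh1, hh2⟩ := (hper (f k)).mpr hk
    refine (hper k).mp ⟨h, hh1, hf ?_⟩
    rw [← Function.iterate_succ_apply' f h k, Function.iterate_succ_apply f h k]
    exact hh2
  have hFfwd : ∀ k, k ∈ F → f k ∈ F := by
    intro k hk
    obtain ⟨h, hh1, hh2⟩ := (hper k).mpr hk
    refine (hper (f k)).mp ⟨h, hh1, ?_⟩
    rw [← Function.iterate_succ_apply f h k, Function.iterate_succ_apply' f h k, hh2]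
  have hFiterback : ∀ a k, f^[a] k ∈ F → k ∈ F := by
    intro a
    induction a with
    | zero => intro k hk; simpa using hk
    | succ a ih =>
      intro k hk
      rw [Function.iterate_succ_apply] at hk
      exact hFback k (ih (f k) hk)
  have hFiterfwd : ∀ a k, k ∈ F → f^[a] k ∈ F := by
    intro a
    induction a with
    | zero => intro k hk; simpa using hk
    | succ a ih =>
      intro k hk
      rw [Function.iterate_succ_apply]
      exact ih (f k) (hFfwd k hk)
  have hFn : ∀ k ∈ F, f^[n] k = k := by
    intro k hk
    have hk' : (k : ℕ) ∈ (F : Set ℕ) := hk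
    rw [hForb] at hk'
    obtain ⟨i, hi⟩ := hk'
    simp only at hi
    rw [← hi, ← Function.iterate_add_apply, Nat.add_comm, Function.iterate_add_apply, hcycle]
  -- iteration identity for eigenvectors
  have hiter : ∀ (x : lp (fun _ : ℕ => ℂ) 2) (lam : ℂ), S x = lam • x →
      ∀ k m, (x : ∀ _ : ℕ, ℂ) k = lam ^ m * x (f^[m] k) := by
    intro x lam heig k m
    induction m with
    | zero => simp
    | succ m ih =>
      have h1 : (x : ∀ _ : ℕ, ℂ) (f^[m] k) = lam * x (f (f^[m] k)) := by
        have h2 := S_apply_range f hf S hS x (f^[m] k)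
        rw [heig, lp.coeFn_smul, Pi.smul_apply, smul_eq_mul] at h2
        exact h2.symm
      rw [ih, h1, Function.iterate_succ_apply' f m k]
      ring
  -- coordinates tend to zero
  have hten : ∀ x : lp (fun _ : ℕ => ℂ) 2,
      Filter.Tendsto (fun m => ‖(x : ∀ _ : ℕ, ℂ) m‖) Filter.cofinite (nhds 0) := by
    intro x
    have hsum : Summable (fun i : ℕ => ‖(x : ∀ _ : ℕ, ℂ) i‖ ^ (2 : ENNReal).toReal) :=
      (lp.memℓp x).summable (by norm_num)
    have hsum2 : Summable (fun i : ℕ => ‖(x : ∀ _ : ℕ, ℂ) i‖ ^ (2 : ℕ)) := by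
      have hfe : (fun i : ℕ => ‖(x : ∀ _ : ℕ, ℂ) i‖ ^ (2 : ℕ)) =
          fun i => ‖(x : ∀ _ : ℕ, ℂ) i‖ ^ (2 : ENNReal).toReal := by
        funext i
        rw [ENNReal.toReal_ofNat, show ((2:ℝ)) = ((2:ℕ):ℝ) by norm_num, Real.rpow_natCast]
      rw [hfe]
      exact hsum
    have h0 := hsum2.tendsto_cofinite_zero
    have h1 : Filter.Tendsto (fun m : ℕ => Real.sqrt (‖(x : ∀ _ : ℕ, ℂ) m‖ ^ (2 : ℕ)))
        Filter.cofinite (nhds 0) := by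
      have h2 := (Real.continuous_sqrt.tendsto 0).comp h0
      simpa [Function.comp_def] using h2
    exact h1.congr fun m => Real.sqrt_sq (norm_nonneg _)
  -- nonzero vectors have a nonzero coordinate
  have hne : ∀ x : lp (fun _ : ℕ => ℂ) 2, x ≠ 0 → ∃ m, (x : ∀ _ : ℕ, ℂ) m ≠ 0 := by
    intro x hx
    by_contra h
    push_neg at h
    exact hx (lp.ext (funext fun m => by simpa using h m))
  -- the support lemma
  have hsupp : ∀ (x : lp (fun _ : ℕ => ℂ) 2) (lam : ℂ), x ≠ 0 → S x = lam • x →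
      ∀ k, k ∉ F → (x : ∀ _ : ℕ, ℂ) k = 0 := by
    intro x lam hx heig
    have heq1 : ∀ a, (x : ∀ _ : ℕ, ℂ) a = lam * x (f a) := by
      intro a
      have h2 := S_apply_range f hf S hS x a
      rw [heig, lp.coeFn_smul, Pi.smul_apply, smul_eq_mul] at h2
      exact h2.symm
    have heq2 : ∀ m, m ∉ Set.range f → lam * (x : ∀ _ : ℕ, ℂ) m = 0 := by
      intro m hm
      have h2 := S_apply_nonrange f S hS x m hm
      rw [heig, lp.coeFn_smul, Pi.smul_apply, smul_eq_mul] at h2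
      exact h2
    rcases eq_or_ne lam 0 with rfl | hlam
    · exfalso
      apply hx
      refine lp.ext (funext fun a => ?_)
      have := heq1 a
      rw [zero_mul] at this
      simpa using this
    intro k hk
    by_contra hxk
    -- forward orbit : u m = f^[m] k, all distinct, |x (u m)| = |x k| / |lam|^m
    set u : ℕ → ℕ := fun m => f^[m] k with hu
    have hxu : ∀ m, (x : ∀ _ : ℕ, ℂ) k = lam ^ m * x (u m) := fun m => hiter x lam heig k m
    have hkey : ∀ a b : ℕ, a < b → u a ≠ u b := by
      intro a b hab he
      have h3 : f^[b - a] (u a) = u a := by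
        show f^[b - a] (f^[a] k) = f^[a] k
        rw [← Function.iterate_add_apply, Nat.sub_add_cancel hab.le]
        exact he.symm
      have hmem : u a ∈ F := (hper (u a)).mp ⟨b - a, by omega, h3⟩
      exact hk (hFiterback a k hmem)
    have huinj : Function.Injective u := by
      intro a b hab
      rcases lt_trichotomy a b with h | h | h
      · exact absurd hab (hkey a b h)
      · exact h
      · exact absurd hab.symm (hkey b a h)
    have hxknorm : (0:ℝ) < ‖(x : ∀ _ : ℕ, ℂ) k‖ := by
      simpa [norm_pos_iff] using hxk
    have h1lt : 1 < ‖lam‖ := by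
      by_contra hle
      push_neg at hle
      have htend := (hten x).comp (huinj.tendsto_cofinite)
      have hev : ∀ᶠ m in Filter.cofinite, ‖(x : ∀ _ : ℕ, ℂ) (u m)‖ < ‖(x : ∀ _ : ℕ, ℂ) k‖ :=
        htend.eventually_lt_const hxknorm
      obtain ⟨m, hm⟩ := hev.exists
      have hxeq : ‖(x : ∀ _ : ℕ, ℂ) k‖ = ‖lam‖ ^ m * ‖(x : ∀ _ : ℕ, ℂ) (u m)‖ := by
        rw [hxu m, norm_mul, norm_pow]
      have hle2 : ‖lam‖ ^ m ≤ 1 := pow_le_one₀ (norm_nonneg _) hle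
      nlinarith [norm_nonneg ((x : ∀ _ : ℕ, ℂ) (u m))]
    -- backward orbit
    have hchoice : ∀ a : ℕ, (x : ∀ _ : ℕ, ℂ) a ≠ 0 → ∃ b, f b = a := by
      intro a ha
      by_contra h
      push_neg at h
      have h4 : a ∉ Set.range f := by rintro ⟨b, rfl⟩; exact h b rfl
      rcases mul_eq_zero.mp (heq2 a h4) with h' | h'
      exacts [hlam h', ha h']
    set g : ℕ → ℕ := fun a => if h : ∃ b, f b = a then h.choose else 0 with hg
    have hgspec : ∀ a, (∃ b, f b = a) → f (g a) = a := by
      intro a h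
      show f (if h' : ∃ b, f b = a then h'.choose else 0) = a
      rw [dif_pos h]
      exact h.choose_spec
    set v : ℕ → ℕ := fun m => g^[m] k with hv
    have hvprop : ∀ m, (x : ∀ _ : ℕ, ℂ) (v m) = lam ^ m * x k ∧ f^[m] (v m) = k := by
      intro m
      induction m with
      | zero => simp [hv]
      | succ m ih =>
        have hxv : (x : ∀ _ : ℕ, ℂ) (v m) ≠ 0 := by
          rw [ih.1]
          exact mul_ne_zero (pow_ne_zero _ hlam) hxk
        have hfg : f (g (v m)) = v m := hgspec _ (hchoice (v m) hxv)
        have hvs : v (m + 1) = g (v m) := Function.iterate_succ_apply' g m k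
        constructor
        · rw [hvs]
          have h5 := heq1 (g (v m))
          rw [hfg, ih.1] at h5
          rw [h5]
          ring
        · rw [hvs, Function.iterate_succ_apply, hfg, ih.2]
    have hvkey : ∀ a b : ℕ, a < b → v a ≠ v b := by
      intro a b hab he
      have h1 : f^[a] (f^[b - a] (v b)) = k := by
        rw [← Function.iterate_add_apply, show a + (b - a) = b by omega]
        exact (hvprop b).2
      have h3 : f^[b - a] (v b) = v a := (hf.iterate a) (h1.trans (hvprop a).2.symm)
      have hmem : v b ∈ F := (hper (v b)).mp ⟨b - a, by omega, by rw [h3, he]⟩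
      have hkF : k ∈ F := by
        rw [← (hvprop b).2]
        exact hFiterfwd b (v b) hmem
      exact hk hkF
    have hvinj : Function.Injective v := by
      intro a b hab
      rcases lt_trichotomy a b with h | h | h
      · exact absurd hab (hvkey a b h)
      · exact h
      · exact absurd hab.symm (hvkey b a h)
    have htend := (hten x).comp (hvinj.tendsto_cofinite)
    have hev : ∀ᶠ m in Filter.cofinite, ‖(x : ∀ _ : ℕ, ℂ) (v m)‖ < ‖(x : ∀ _ : ℕ, ℂ) k‖ :=
      htend.eventually_lt_const hxknorm
    obtain ⟨m, hm⟩ := hev.exists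
    have hxeq : ‖(x : ∀ _ : ℕ, ℂ) (v m)‖ = ‖lam‖ ^ m * ‖(x : ∀ _ : ℕ, ℂ) k‖ := by
      rw [(hvprop m).1, norm_mul, norm_pow]
    have hge : (1:ℝ) ≤ ‖lam‖ ^ m := one_le_pow₀ h1lt.le
    nlinarith
  constructor
  · -- part 1 : eigenvectors lie in the span
    intro x lam hx heig
    have hx_eq : x = ∑ k ∈ F, (x : ∀ _ : ℕ, ℂ) k • e k := by
      refine lp.ext (funext fun m => ?_)
      rw [lp.coeFn_sum, Finset.sum_apply]
      have hterm : ∀ k ∈ F, ((((x : ∀ _ : ℕ, ℂ) k • e k : lp (fun _ : ℕ => ℂ) 2)) : ∀ _ : ℕ, ℂ) m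
          = if m = k then (x : ∀ _ : ℕ, ℂ) k else 0 := by
        intro k _
        rw [lp.coeFn_smul, Pi.smul_apply, smul_eq_mul, e_apply]
        by_cases h : m = k <;> simp [h]
      rw [Finset.sum_congr rfl hterm, Finset.sum_ite_eq F m (fun k => (x : ∀ _ : ℕ, ℂ) k)]
      by_cases hm : m ∈ F
      · rw [if_pos hm]
      · rw [if_neg hm, hsupp x lam hx heig m hm]
    rw [hx_eq]
    exact Submodule.sum_mem _ fun k hk =>
      Submodule.smul_mem _ _ (Submodule.subset_span ⟨k, hk, rfl⟩)
  · -- part 2 : the point spectrum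
    intro lam
    constructor
    · rintro ⟨x, hx, heig⟩
      obtain ⟨m, hm⟩ := hne x hx
      have hmF : m ∈ F := by
        by_contra hmF
        exact hm (hsupp x lam hx heig m hmF)
      have h6 := hiter x lam heig m n
      rw [hFn m hmF] at h6
      have h7 : (1 : ℂ) * (x : ∀ _ : ℕ, ℂ) m = lam ^ n * (x : ∀ _ : ℕ, ℂ) m := by
        rw [one_mul]; exact h6
      exact (mul_right_cancel₀ hm h7).symm
    · intro hl
      obtain ⟨m, rfl⟩ : ∃ m, n = m + 1 := ⟨n - 1, by omega⟩
      have hlam0 : lam ≠ 0 := by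
        rintro rfl
        rw [zero_pow (Nat.succ_ne_zero m)] at hl
        exact zero_ne_one hl
      set g : Fin (m + 1) → ℕ := fun i => f^[(i : ℕ)] j with hgdef
      have hginj : Function.Injective g := by
        have hFs : Finset.image g Finset.univ = F := by
          apply Finset.coe_injective
          rw [Finset.coe_image, Finset.coe_univ, Set.image_univ, hForb]
        have hcard : (Finset.image g Finset.univ).card = (Finset.univ : Finset (Fin (m + 1))).card := by
          rw [hFs, hFcard]
          simp
        have hio := Finset.injOn_of_card_image_eq hcard
        intro a b hab
        exact hio (Finset.mem_univ a) (Finset.mem_univ b) hab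
      set c : Fin (m + 1) → ℂ := fun i => lam ^ (m + 1 - (i : ℕ)) with hcdef
      refine ⟨∑ i, c i • e (g i), ?_, ?_⟩
      · -- nonzero : coordinate at j is lam ^ (m+1) = 1
        intro h0
        have h9 : ((∑ i, c i • e (g i) : lp (fun _ : ℕ => ℂ) 2) : ∀ _ : ℕ, ℂ) j = 0 := by
          rw [h0]; simp
        rw [lp.coeFn_sum, Finset.sum_apply] at h9
        have hterm : ∀ i : Fin (m + 1),
            (((c i • e (g i) : lp (fun _ : ℕ => ℂ) 2)) : ∀ _ : ℕ, ℂ) j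
              = if i = 0 then c 0 else 0 := by
          intro i
          rw [lp.coeFn_smul, Pi.smul_apply, smul_eq_mul, e_apply]
          rcases eq_or_ne i 0 with rfl | hi
          · simp [hgdef]
          · have hji : j ≠ g i := by
              intro he
              apply hi
              apply hginj
              show g i = g 0
              rw [hgdef]
              simpa using he.symm
            rw [if_neg hji, mul_zero, if_neg hi]
        rw [Finset.sum_congr rfl (fun i _ => hterm i)] at h9
        simp only [Finset.sum_ite_eq' Finset.univ (0 : Fin (m + 1)), Finset.mem_univ,
          if_true] at h9
        rw [hcdef] at h9
        simp only [Fin.val_zero, Nat.sub_zero] at h9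
        rw [hl] at h9
        exact one_ne_zero h9
      · -- eigen equation
        rw [map_sum]
        have hstep : ∀ i : Fin (m + 1), S (c i • e (g i)) = c i • e (g (i + 1)) := by
          intro i
          rw [map_smul, hS]
          congr 2
          show f (f^[(i : ℕ)] j) = f^[((i + 1 : Fin (m + 1)) : ℕ)] j
          rw [← Function.iterate_succ_apply' f (i : ℕ) j, Fin.val_add_one]
          rcases eq_or_ne i (Fin.last m) with rfl | hi
          · rw [if_pos rfl]
            show f^[m + 1] j = f^[0] j
            rw [hcycle]
            rfl
          · rw [if_neg hi]
        rw [Finset.sum_congr rfl (fun i _ => hstep i), Finset.smul_sum]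
        refine Fintype.sum_equiv (Equiv.addRight (1 : Fin (m + 1))) _ _ ?_
        intro i
        simp only [Equiv.coe_addRight]
        rw [smul_smul]
        congr 1
        show c i = lam * c (i + 1)
        rw [hcdef]
        simp only
        rw [Fin.val_add_one]
        rcases eq_or_ne i (Fin.last m) with rfl | hi
        · rw [if_pos rfl]
          show lam ^ (m + 1 - m) = lam * lam ^ (m + 1 - 0)
          rw [Nat.sub_zero, hl, mul_one, show m + 1 - m = 1 by omega, pow_one]
        · rw [if_neg hi]
          have hlt : (i : ℕ) < m := by
            have := i.isLt
            rcases Nat.lt_or_ge (i : ℕ) m with h | h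
            · exact h
            · exfalso; apply hi; apply Fin.ext; simp [Fin.last]; omega
          rw [show m + 1 - (i : ℕ) = (m - (i : ℕ)) + 1 by omega,
            show m + 1 - ((i : ℕ) + 1) = m - (i : ℕ) by omega, pow_succ]
          ring
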